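/- Suppose for a.e. s and all (z,v) the map r ↦ Λ(s,z,rv) is convex on (0,∞) (radial convexity). Then for every (s,z,v) in the effective domain of Λ, the map μ ↦ μ·Λ(s,z,v/μ) is convex on (0,∞). -/

import Mathlib

open MeasureTheory Set
open scoped ENNReal

/-- Radial convexity: if for a.e. `s` and all `(z,v)` the map `r ↦ Λ(s,z,rv)` is
convex on `(0,∞)`, then for every `(s,z,v)` in the effective domain of `Λ` the
perspective-type map `μ ↦ μ·Λ(s,z,v/μ)` is convex on `(0,∞)`. -/
theorem stmt6 (n : ℕ) (t T : ℝ) (ht : t < T)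
    (Λ : ℝ → EuclideanSpace ℝ (Fin n) → EuclideanSpace ℝ (Fin n) → ℝ≥0∞)
    (hconv : ∀ᵐ s ∂(volume.restrict (Icc t T)),
      ∀ (z v : EuclideanSpace ℝ (Fin n)) (r₁ r₂ a b : ℝ),
        0 < r₁ → 0 < r₂ → 0 ≤ a → 0 ≤ b → a + b = 1 →
        Λ s z ((a * r₁ + b * r₂) • v) ≤
          ENNReal.ofReal a * Λ s z (r₁ • v) + ENNReal.ofReal b * Λ s z (r₂ • v)) :
    ∀ᵐ s ∂(volume.restrict (Icc t T)),
      ∀ (z v : EuclideanSpace ℝ (Fin n)), Λ s z v ≠ ⊤ →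
        ∀ (μ₁ μ₂ a b : ℝ), 0 < μ₁ → 0 < μ₂ → 0 ≤ a → 0 ≤ b → a + b = 1 →
        ENNReal.ofReal (a * μ₁ + b * μ₂) * Λ s z ((a * μ₁ + b * μ₂)⁻¹ • v) ≤
          ENNReal.ofReal a * (ENNReal.ofReal μ₁ * Λ s z (μ₁⁻¹ • v)) +
          ENNReal.ofReal b * (ENNReal.ofReal μ₂ * Λ s z (μ₂⁻¹ • v)) := by
  filter_upwards [hconv] with s hs
  intro z v _ μ₁ μ₂ a b hμ₁ hμ₂ ha hb hab
  set μ : ℝ := a * μ₁ + b * μ₂ with hμdef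
  have hμ : 0 < μ := by
    rcases lt_or_ge 0 a with h | h
    · have : 0 < a * μ₁ := mul_pos h hμ₁
      nlinarith [mul_nonneg hb hμ₂.le]
    · have hb' : 0 < b := by linarith
      have : 0 < b * μ₂ := mul_pos hb' hμ₂
      nlinarith [mul_nonneg ha hμ₁.le]
  have key := hs z v μ₁⁻¹ μ₂⁻¹ (a * μ₁ / μ) (b * μ₂ / μ)
    (inv_pos.mpr hμ₁) (inv_pos.mpr hμ₂)
    (div_nonneg (mul_nonneg ha hμ₁.le) hμ.le)
    (div_nonneg (mul_nonneg hb hμ₂.le) hμ.le)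
    (by rw [← add_div, ← hμdef, div_self hμ.ne'])
  have harg : a * μ₁ / μ * μ₁⁻¹ + b * μ₂ / μ * μ₂⁻¹ = μ⁻¹ := by
    have h1 : a * μ₁ / μ * μ₁⁻¹ = a / μ := by
      field_simp
    have h2 : b * μ₂ / μ * μ₂⁻¹ = b / μ := by
      field_simp
    rw [h1, h2, ← add_div, hab, one_div]
  rw [harg] at key
  calc ENNReal.ofReal μ * Λ s z (μ⁻¹ • v)
      ≤ ENNReal.ofReal μ * (ENNReal.ofReal (a * μ₁ / μ) * Λ s z (μ₁⁻¹ • v) +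
          ENNReal.ofReal (b * μ₂ / μ) * Λ s z (μ₂⁻¹ • v)) :=
        mul_le_mul_right key _
    _ = ENNReal.ofReal a * (ENNReal.ofReal μ₁ * Λ s z (μ₁⁻¹ • v)) +
          ENNReal.ofReal b * (ENNReal.ofReal μ₂ * Λ s z (μ₂⁻¹ • v)) := by
        rw [mul_add, ← mul_assoc, ← mul_assoc, ← ENNReal.ofReal_mul hμ.le,
          ← ENNReal.ofReal_mul hμ.le]
        rw [mul_div_cancel₀ _ hμ.ne', mul_div_cancel₀ _ hμ.ne']
        rw [ENNReal.ofReal_mul ha, ENNReal.ofReal_mul hb, mul_assoc, mul_assoc]
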